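/- Let Δ be an infinite additive subgroup of ℂ, b ∈ ℂ with 2b ∉ Δ, and φ : Δ → ℂ an additive group homomorphism. The ℂ-bilinear bracket on the vector space with basis {x_{α,i} : α ∈ Δ, i ∈ ℤ} defined by [x_{α,i}, x_{β,j}] = (i(β+b) − j(α+b)) x_{α+β,i+j−1} + B(α,β) x_{α+β,i+j} is skew-symmetric and satisfies the Jacobi identity, i.e. it makes this space a Lie algebra (the coefficient algebra Coeff(CL(b,φ)) ). -/

import Mathlib

/-- `B(α,β) = (1/b)(φ(α)β − φ(β)α + b(φ(α) − φ(β)))`. -/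
noncomputable def Bc (b : ℂ) {Δ : AddSubgroup ℂ} (φ : Δ →+ ℂ) (α β : Δ) : ℂ :=
  (1 / b) * (φ α * (β : ℂ) - φ β * (α : ℂ) + b * (φ α - φ β))

/-- The bilinear bracket on the free ℂ-vector space with basis
`{x_{α,i} : α ∈ Δ, i ∈ ℤ}` (modelled as `(Δ × ℤ) →₀ ℂ` with `x_{α,i} = single (α,i) 1`)
given by `[x_{α,i}, x_{β,j}] = (i(β+b) − j(α+b)) x_{α+β,i+j−1} + B(α,β) x_{α+β,i+j}`
is skew-symmetric and satisfies the Jacobi identity, i.e. it defines a Lie algebra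
(the coefficient algebra `Coeff(CL(b,φ))`). -/
theorem stmt1 (Δ : AddSubgroup ℂ) (hΔinf : (Δ : Set ℂ).Infinite)
    (b : ℂ) (hb : 2 * b ∉ Δ) (φ : Δ →+ ℂ)
    (br : ((Δ × ℤ) →₀ ℂ) →ₗ[ℂ] ((Δ × ℤ) →₀ ℂ) →ₗ[ℂ] ((Δ × ℤ) →₀ ℂ))
    (hbr : ∀ (α β : Δ) (i j : ℤ),
      br (Finsupp.single (α, i) 1) (Finsupp.single (β, j) 1)
        = ((i : ℂ) * ((β : ℂ) + b) - (j : ℂ) * ((α : ℂ) + b)) •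
            Finsupp.single (α + β, i + j - 1) (1 : ℂ)
          + Bc b φ α β • Finsupp.single (α + β, i + j) (1 : ℂ)) :
    (∀ x y, br x y = - br y x) ∧
    (∀ x y z, br x (br y z) = br (br x y) z + br y (br x z)) := by
  have hb0 : b ≠ 0 := by
    rintro rfl
    exact hb (by simpa using Δ.zero_mem)
  constructor
  · intro x y
    induction x using Finsupp.induction_linear with
    | zero => simp
    | add f g hf hg =>
        simp only [map_add, LinearMap.add_apply, hf, hg]; abel
    | single p c =>
        induction y using Finsupp.induction_linear with
        | zero => simp
        | add f g hf hg =>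
            simp only [map_add, LinearMap.add_apply, hf, hg]; abel
        | single q d =>
            obtain ⟨α, i⟩ := p
            obtain ⟨β, j⟩ := q
            rw [← Finsupp.smul_single_one (α, i) c, ← Finsupp.smul_single_one (β, j) d]
            simp only [map_smul, LinearMap.smul_apply, hbr]
            rw [add_comm β α, add_comm j i]
            match_scalars <;> (try simp only [Bc]) <;> ring
  · intro x y z
    induction x using Finsupp.induction_linear with
    | zero => simp
    | add f g hf hg =>
        simp only [map_add, LinearMap.add_apply, hf, hg]; abel
    | single p c =>
        induction y using Finsupp.induction_linear with
        | zero => simp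
        | add f g hf hg =>
            simp only [map_add, LinearMap.add_apply, hf, hg]; abel
        | single q d =>
            induction z using Finsupp.induction_linear with
            | zero => simp
            | add f g hf hg =>
                simp only [map_add, LinearMap.add_apply, hf, hg]; abel
            | single r e =>
                obtain ⟨α, i⟩ := p
                obtain ⟨β, j⟩ := q
                obtain ⟨γ, k⟩ := r
                rw [← Finsupp.smul_single_one (α, i) c, ← Finsupp.smul_single_one (β, j) d,
                  ← Finsupp.smul_single_one (γ, k) e]
                simp only [map_smul, LinearMap.smul_apply, map_add, LinearMap.add_apply, hbr]
                have e1 : α + (β + γ) = α + β + γ := (add_assoc α β γ).symm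
                have e2 : β + (α + γ) = α + β + γ := by
                  rw [add_left_comm, add_assoc]
                have n1 : i + (j + k - 1) - 1 = i + j + k - 2 := by ring
                have n2 : i + (j + k - 1) = i + j + k - 1 := by ring
                have n3 : i + (j + k) - 1 = i + j + k - 1 := by ring
                have n4 : i + (j + k) = i + j + k := by ring
                have n5 : i + j - 1 + k - 1 = i + j + k - 2 := by ring
                have n6 : i + j - 1 + k = i + j + k - 1 := by ring
                have n7 : i + j + k - 1 = i + j + k - 1 := rfl
                have n8 : j + (i + k - 1) - 1 = i + j + k - 2 := by ring
                have n9 : j + (i + k - 1) = i + j + k - 1 := by ring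
                have n10 : j + (i + k) - 1 = i + j + k - 1 := by ring
                have n11 : j + (i + k) = i + j + k := by ring
                rw [e1, e2, n1, n2, n3, n4, n5, n6, n8, n9, n10, n11]
                match_scalars <;> (try simp only [Bc, AddSubgroup.coe_add, map_add]) <;>
                  (try field_simp) <;> ring
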